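/- (Correctness of intermediate trend counts, Equation 2, supporting Theorem 3.1.) Suppose count : Fin n → ℕ satisfies the trend-count recurrence: for every v : Fin n, count v = (if v ∈ S then 1 else 0) + ∑ over u : Fin n with E u v of count u. Then for every v : Fin n, count v equals the number of event trends ending at v, i.e. count v = Set.ncard {l : List (Fin n) | l ≠ [] ∧ l.Chain' E ∧ (the first element of l belongs to S) ∧ l.getLast? = some v}. -/

import Mathlib

namespace TrendCountAux

variable {n : ℕ}

def T (E : Fin n → Fin n → Prop) (S : Finset (Fin n)) (v : Fin n) : Set (List (Fin n)) :=
  {l | l ≠ [] ∧ l.Chain' E ∧ (∃ x ∈ S, l.head? = some x) ∧ l.getLast? = some v}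

lemma sorted_of_mem {E : Fin n → Fin n → Prop} (hE : ∀ u v, E u v → u < v)
    {S : Finset (Fin n)} {v : Fin n} {l : List (Fin n)} (hl : l ∈ T E S v) :
    l.Pairwise (· < ·) := by
  rcases hl with ⟨-, hc, -, -⟩
  rw [← List.isChain_iff_pairwise]
  exact hc.imp (fun a b => hE a b)

lemma finite_T {E : Fin n → Fin n → Prop} (hE : ∀ u v, E u v → u < v)
    (S : Finset (Fin n)) (v : Fin n) : (T E S v).Finite := by
  have hinj : Set.InjOn List.toFinset (T E S v) := by
    intro a ha b hb h
    have ha' := sorted_of_mem hE ha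
    have hb' := sorted_of_mem hE hb
    have : Std.Antisymm (α := Fin n) (· < ·) := ⟨fun a b h h' => absurd h' (lt_asymm h)⟩
    exact List.Perm.eq_of_pairwise' ha' hb'
      (List.perm_of_nodup_nodup_toFinset_eq ha'.nodup hb'.nodup h)
  exact Set.Finite.of_finite_image (Set.toFinite _) hinj

noncomputable def F (E : Fin n → Fin n → Prop) (hE : ∀ u v, E u v → u < v)
    (S : Finset (Fin n)) (v : Fin n) : Finset (List (Fin n)) :=
  (finite_T hE S v).toFinset

lemma mem_F {E : Fin n → Fin n → Prop} {hE : ∀ u v, E u v → u < v}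
    {S : Finset (Fin n)} {v : Fin n} {l : List (Fin n)} :
    l ∈ F E hE S v ↔ l ∈ T E S v := Set.Finite.mem_toFinset _

lemma mem_T_iff {E : Fin n → Fin n → Prop} (hE : ∀ u v, E u v → u < v)
    {S : Finset (Fin n)} {v : Fin n} {l : List (Fin n)} :
    l ∈ T E S v ↔ (v ∈ S ∧ l = [v]) ∨
      ∃ u, E u v ∧ ∃ l' ∈ T E S u, l = l' ++ [v] := by
  constructor
  · rintro ⟨hne, hc, ⟨x, hxS, hx⟩, hlast⟩
    have hlv : l.getLast hne = v := by
      have := List.getLast?_eq_getLast hne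
      rw [this] at hlast; exact Option.some_injective _ hlast
    have hdec : l = l.dropLast ++ [v] := by
      conv_lhs => rw [← List.dropLast_append_getLast hne]
      rw [hlv]
    rcases eq_or_ne l.dropLast [] with h0 | h0
    · left
      rw [h0] at hdec
      simp only [List.nil_append] at hdec
      subst hdec
      simp only [List.head?_cons, Option.some.injEq] at hx
      exact ⟨hx ▸ hxS, rfl⟩
    · right
      rw [hdec] at hc
      simp only [List.Chain'] at hc
      rw [List.isChain_append] at hc
      obtain ⟨hc1, -, hc3⟩ := hc
      set l' := l.dropLast with hl'
      have hlast' : l'.getLast? = some (l'.getLast h0) := List.getLast?_eq_getLast h0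
      refine ⟨l'.getLast h0, hc3 _ hlast' _ rfl, l', ⟨h0, hc1, ⟨x, hxS, ?_⟩, hlast'⟩, hdec⟩
      · -- head? of l' equals head? of l
        rw [hdec, List.head?_append_of_ne_nil _ h0] at hx
        exact hx
  · rintro (⟨hvS, rfl⟩ | ⟨u, huv, l', ⟨hne', hc', ⟨x, hxS, hx⟩, hlast'⟩, rfl⟩)
    · exact ⟨by simp, List.isChain_singleton v, ⟨v, hvS, rfl⟩, rfl⟩
    · refine ⟨by simp, ?_, ⟨x, hxS, ?_⟩, List.getLast?_concat⟩
      · simp only [List.Chain']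
        rw [List.isChain_append]
        refine ⟨hc', List.isChain_singleton v, ?_⟩
        intro a ha b hb
        rw [hlast'] at ha
        simp only [List.head?_cons, Option.mem_def, Option.some.injEq] at ha hb
        subst ha; subst hb; exact huv
      · rw [List.head?_append_of_ne_nil _ hne']; exact hx

lemma F_eq {E : Fin n → Fin n → Prop} [DecidableRel E] (hE : ∀ u v, E u v → u < v)
    (S : Finset (Fin n)) (v : Fin n) :
    F E hE S v = (if v ∈ S then {[v]} else ∅) ∪
      (Finset.univ.filter (fun u => E u v)).biUnion
        (fun u => (F E hE S u).image (· ++ [v])) := by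
  ext l
  rw [mem_F, mem_T_iff hE]
  simp only [Finset.mem_union, Finset.mem_biUnion, Finset.mem_filter, Finset.mem_univ,
    true_and, Finset.mem_image, mem_F]
  constructor
  · rintro (⟨h1, h2⟩ | ⟨u, h1, l', h2, h3⟩)
    · left; simp [h1, h2]
    · right; exact ⟨u, h1, l', h2, h3.symm⟩
  · rintro (h | ⟨u, h1, l', h2, h3⟩)
    · left
      split_ifs at h with hv
      · simp only [Finset.mem_singleton] at h; exact ⟨hv, h⟩
      · simp at h
    · right; exact ⟨u, h1, l', h2, h3.symm⟩

lemma card_F {E : Fin n → Fin n → Prop} [DecidableRel E] (hE : ∀ u v, E u v → u < v)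
    (S : Finset (Fin n)) (v : Fin n) :
    (F E hE S v).card = (if v ∈ S then 1 else 0) +
      ∑ u ∈ Finset.univ.filter (fun u => E u v), (F E hE S u).card := by
  rw [F_eq hE S v]
  have hdisj : Disjoint (if v ∈ S then ({[v]} : Finset (List (Fin n))) else ∅)
      ((Finset.univ.filter (fun u => E u v)).biUnion
        (fun u => (F E hE S u).image (· ++ [v]))) := by
    rw [Finset.disjoint_left]
    intro l hl hr
    split_ifs at hl with hv
    · simp only [Finset.mem_singleton] at hl
      simp only [Finset.mem_biUnion, Finset.mem_image, mem_F] at hr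
      obtain ⟨u, -, l', hl', heq⟩ := hr
      have : l'.length + 1 = 1 := by
        have := congrArg List.length heq
        simp only [List.length_append, List.length_singleton, hl,
          List.length_cons, List.length_nil] at this
        omega
      have hne : l' ≠ [] := hl'.1
      have : l'.length ≠ 0 := fun h => hne (List.length_eq_zero_iff.mp h)
      omega
    · simp at hl
  rw [Finset.card_union_of_disjoint hdisj]
  congr 1
  · split_ifs <;> simp
  · rw [Finset.card_biUnion]
    · refine Finset.sum_congr rfl fun u _ => ?_
      exact Finset.card_image_of_injective _ (List.append_left_injective _)
    · intro u hu u' hu' huu'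
      rw [Function.onFun, Finset.disjoint_left]
      intro l hl hr
      simp only [Finset.mem_image, mem_F] at hl hr
      obtain ⟨a, ha, hal⟩ := hl
      obtain ⟨b, hb, hbl⟩ := hr
      have : a = b := List.append_left_injective _ (hal.trans hbl.symm)
      subst this
      have h1 := ha.2.2.2
      have h2 := hb.2.2.2
      rw [h1] at h2
      exact huu' (Option.some_injective _ h2)

lemma main {E : Fin n → Fin n → Prop} [DecidableRel E] (hE : ∀ u v, E u v → u < v)
    (S : Finset (Fin n)) (count : Fin n → ℕ)
    (hcount : ∀ v, count v = (if v ∈ S then 1 else 0) +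
      ∑ u ∈ Finset.univ.filter (fun u => E u v), count u) :
    ∀ v : Fin n, count v = (F E hE S v).card := by
  have key : ∀ m : ℕ, ∀ v : Fin n, v.val < m → count v = (F E hE S v).card := by
    intro m
    induction m with
    | zero => intro v hv; omega
    | succ m ih =>
      intro v hv
      rw [hcount v, card_F hE S v]
      congr 1
      refine Finset.sum_congr rfl fun u hu => ?_
      rw [Finset.mem_filter] at hu
      exact ih u (by have := hE u v hu.2; omega)
  intro v; exact key (v.val + 1) v (Nat.lt_succ_self _)

end TrendCountAux

/-- Correctness of intermediate trend counts (Equation 2, supporting Theorem 3.1):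
if `count` satisfies the trend-count recurrence, then `count v` is the number of
event trends ending at `v`. -/
theorem intermediate_trend_count_correct
    (n : ℕ) (E : Fin n → Fin n → Prop) [DecidableRel E]
    (hE : ∀ u v, E u v → u < v)
    (S : Finset (Fin n)) (count : Fin n → ℕ)
    (hcount : ∀ v, count v =
      (if v ∈ S then 1 else 0) +
        ∑ u ∈ Finset.univ.filter (fun u => E u v), count u) :
    ∀ v : Fin n, count v =
      Set.ncard {l : List (Fin n) |
        l ≠ [] ∧ l.Chain' E ∧ (∃ x ∈ S, l.head? = some x) ∧ l.getLast? = some v} := by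
  intro v
  rw [TrendCountAux.main hE S count hcount v]
  show _ = Set.ncard (TrendCountAux.T E S v)
  rw [Set.ncard_eq_toFinset_card _ (TrendCountAux.finite_T hE S v)]
  rfl
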